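/- For every k ∈ ℕ and reals ε, δ > 0, there exists n ∈ ℕ such that for every finite set I with |I| > n there is a partition 2^I = a⁰ ∪ a¹ satisfying: for every distribution m on 2^I (i.e., m : 2^I → ℝ with 0 ≤ m(x) ≤ 2^{-|I|} for all x) with total mass m̄ = Σ_x m(x) ≥ ε, there exists T ⊆ 2^I with |T|/2^{|I|} > 1 − δ such that for every s ∈ T, | Σ{m(t) : t ∈ a⁰ + s} − m̄/2 | < δ. -/

import Mathlib

open scoped Classical
noncomputable section
set_option linter.unusedSectionVars false
set_option maxHeartbeats 1000000

variable {I : Type} [Fintype I] [DecidableEq I]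

private def chi (z : ZMod 2) : ℝ := if z = 0 then 1 else -1
private lemma zmod2_cases (a : ZMod 2) : a = 0 ∨ a = 1 := by revert a; decide
private lemma chi_add (a b : ZMod 2) : chi (a + b) = chi a * chi b := by
  rcases zmod2_cases a with ha | ha <;> rcases zmod2_cases b with hb | hb <;>
    subst ha <;> subst hb <;> norm_num [chi] <;> decide
private lemma chi_mul_self (a : ZMod 2) : chi a * chi a = 1 := by
  rcases zmod2_cases a with ha | ha <;> subst ha <;> norm_num [chi]
private lemma abs_chi (a : ZMod 2) : |chi a| = 1 := by
  rcases zmod2_cases a with ha | ha <;> subst ha <;> norm_num [chi]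
private def wgt (x : I → ZMod 2) : ZMod 2 := ∑ i, x i
private def ip (u v : I → ZMod 2) : ZMod 2 := ∑ i, u i * v i
private def bet (u d : I → ZMod 2) : ZMod 2 := wgt u * wgt d + ip u d
private lemma addself (v : I → ZMod 2) : v + v = 0 := by
  funext i; exact CharTwo.add_self_eq_zero _
private lemma bet_add_left (u v d : I → ZMod 2) :
    bet (u + v) d = bet u d + bet v d := by
  unfold bet wgt ip
  simp only [Pi.add_apply, add_mul, Finset.sum_add_distrib]
  ring
private lemma K_eq_zero (d : I → ZMod 2) (hd : ¬ ∀ u, bet u d = 0) :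
    ∑ v, chi (bet v d) = 0 := by
  push_neg at hd
  obtain ⟨u₀, h0⟩ := hd
  have h1 : bet u₀ d = 1 := by
    rcases zmod2_cases (bet u₀ d) with h | h
    · exact absurd h h0
    · exact h
  have h2 : ∑ v, chi (bet v d) = ∑ v, chi (bet (u₀ + v) d) :=
    (Equiv.sum_comp (Equiv.addLeft u₀) (fun v => chi (bet v d))).symm
  have h3 : ∀ v : I → ZMod 2, chi (bet (u₀ + v) d) = - chi (bet v d) := by
    intro v
    rw [bet_add_left, h1, chi_add]
    norm_num [chi]
    split_ifs <;> norm_num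
  have h4 : ∑ v, chi (bet v d) = - ∑ v, chi (bet v d) := by
    calc ∑ v, chi (bet v d) = ∑ v, chi (bet (u₀ + v) d) := h2
      _ = ∑ v, - chi (bet v d) := by simp only [h3]
      _ = - ∑ v, chi (bet v d) := by rw [Finset.sum_neg_distrib]
  linarith
private lemma bet_all_zero (d : I → ZMod 2) (hd : ∀ u, bet u d = 0) :
    d = 0 ∨ d = fun _ => 1 := by
  have hi : ∀ i, d i = wgt d := by
    intro i
    have h := hd (Pi.single i 1)
    unfold bet wgt ip at h
    rw [Finset.sum_pi_single'] at h
    simp only [Finset.mem_univ, if_true] at h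
    have h2 : ∑ j, (Pi.single i 1 : I → ZMod 2) j * d j = d i := by
      rw [Finset.sum_eq_single i]
      · simp
      · intro j _ hj; simp [Pi.single_apply, hj]
      · simp
    rw [h2, one_mul] at h
    unfold wgt
    have h3 : d i + d i = 0 := CharTwo.add_self_eq_zero _
    linear_combination -h + h3
  rcases zmod2_cases (wgt d) with hw | hw
  · left; funext i; rw [hi i, hw]; rfl
  · right; funext i; rw [hi i, hw]

variable [LinearOrder I]

private def qB (x : I → ZMod 2) : ZMod 2 :=
  ∑ p ∈ Finset.univ.filter (fun p : I × I => p.1 < p.2), x p.1 * x p.2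

private lemma cross_sum (u d : I → ZMod 2) :
    (∑ p ∈ Finset.univ.filter (fun p : I × I => p.1 < p.2), u p.1 * d p.2)
      + (∑ p ∈ Finset.univ.filter (fun p : I × I => p.1 < p.2), d p.1 * u p.2)
      = bet u d := by
  have hswap : ∑ p ∈ Finset.univ.filter (fun p : I × I => p.1 < p.2), d p.1 * u p.2
      = ∑ p ∈ Finset.univ.filter (fun p : I × I => p.2 < p.1), u p.1 * d p.2 := by
    refine Finset.sum_nbij' (fun p => p.swap) (fun p => p.swap) ?_ ?_ ?_ ?_ ?_ <;>
      simp [mul_comm]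
  rw [hswap]
  have hdiag : ∑ p ∈ Finset.univ.filter (fun p : I × I => p.1 = p.2), u p.1 * d p.2
      = ip u d := by
    unfold ip
    refine Finset.sum_nbij' (fun p => p.1) (fun i => (i, i)) ?_ ?_ ?_ ?_ ?_ <;> simp
  have htotal : (∑ p : I × I, u p.1 * d p.2) = wgt u * wgt d := by
    unfold wgt
    rw [Finset.sum_mul_sum]
    have h := Finset.sum_product' (s := (Finset.univ : Finset I)) (t := (Finset.univ : Finset I))
      (f := fun i j => u i * d j)
    rw [Finset.univ_product_univ] at h
    exact h
  have hsplit : (∑ p : I × I, u p.1 * d p.2)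
      = (∑ p ∈ Finset.univ.filter (fun p : I × I => p.1 < p.2), u p.1 * d p.2)
      + ((∑ p ∈ Finset.univ.filter (fun p : I × I => p.2 < p.1), u p.1 * d p.2)
      + (∑ p ∈ Finset.univ.filter (fun p : I × I => p.1 = p.2), u p.1 * d p.2)) := by
    rw [← Finset.sum_filter_add_sum_filter_not Finset.univ (fun p : I × I => p.1 < p.2)]
    congr 1
    rw [← Finset.sum_filter_add_sum_filter_not
      (Finset.univ.filter (fun p : I × I => ¬ p.1 < p.2)) (fun p : I × I => p.2 < p.1)]
    congr 1
    · apply Finset.sum_congr _ (fun _ _ => rfl)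
      rw [Finset.filter_filter]
      apply Finset.filter_congr
      intro p _
      constructor
      · exact fun h => h.2
      · exact fun h => ⟨asymm h, h⟩
    · apply Finset.sum_congr _ (fun _ _ => rfl)
      rw [Finset.filter_filter]
      apply Finset.filter_congr
      intro p _
      constructor
      · intro h; exact le_antisymm (not_lt.mp h.2) (not_lt.mp h.1)
      · intro h; exact ⟨by simp [h], by simp [h]⟩
  rw [hdiag, htotal] at hsplit
  unfold bet
  have : ip u d + ip u d = 0 := CharTwo.add_self_eq_zero _
  linear_combination -hsplit - this

private lemma qB_add (u d : I → ZMod 2) : qB (u + d) = qB u + qB d + bet u d := by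
  unfold qB
  have h1 : ∀ p ∈ Finset.univ.filter (fun p : I × I => p.1 < p.2),
      (u + d) p.1 * (u + d) p.2
        = u p.1 * u p.2 + d p.1 * d p.2 + (u p.1 * d p.2 + d p.1 * u p.2) := by
    intro p _; simp only [Pi.add_apply]; ring
  rw [Finset.sum_congr rfl h1]
  simp only [Finset.sum_add_distrib]
  rw [cross_sum]

private lemma card_fun2 : (Fintype.card (I → ZMod 2) : ℝ) = 2 ^ Fintype.card I := by
  rw [Fintype.card_fun]
  norm_num

private lemma core (δ : ℝ) (hδ : 0 < δ)
    (hN : 1 / (2 * δ ^ 3) < 2 ^ Fintype.card I) :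
    ∃ a0 a1 : Finset (I → ZMod 2),
      a0 ∪ a1 = Finset.univ ∧ Disjoint a0 a1 ∧
      ∀ m : (I → ZMod 2) → ℝ,
        (∀ x, 0 ≤ m x) → (∀ x, m x ≤ 1 / 2 ^ Fintype.card I) →
        ∃ T : Finset (I → ZMod 2), (T.card : ℝ) / 2 ^ Fintype.card I > 1 - δ ∧
          ∀ s ∈ T,
            |(∑ t ∈ a0.image (· + s), m t) - (∑ x, m x) / 2| < δ := by
  classical
  set N := Fintype.card I with hNdef
  refine ⟨Finset.univ.filter (fun x => qB x = 0),
    Finset.univ.filter (fun x => ¬ qB x = 0),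
    Finset.filter_union_filter_not_eq _ _, Finset.disjoint_filter_filter_not _ _ _, ?_⟩
  intro m hm0 hm1
  set M := ∑ x, m x with hMdef
  have h2N : (0:ℝ) < 2 ^ N := by positivity
  have hM0 : 0 ≤ M := Finset.sum_nonneg fun x _ => hm0 x
  have hM1 : M ≤ 1 := by
    calc M ≤ ∑ _x : I → ZMod 2, (1 / 2 ^ N : ℝ) := Finset.sum_le_sum fun x _ => hm1 x
      _ = (Fintype.card (I → ZMod 2) : ℝ) * (1 / 2 ^ N) := by
          rw [Finset.sum_const, Finset.card_univ, nsmul_eq_mul]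
      _ = 1 := by rw [card_fun2, ← hNdef]; field_simp
  set E : (I → ZMod 2) → ℝ := fun s => ∑ t, m t * chi (qB (t + s)) with hEdef
  -- Step A
  have hS : ∀ s, (∑ t ∈ (Finset.univ.filter (fun x => qB x = 0)).image (· + s), m t)
      = (M + E s) / 2 := by
    intro s
    have himg : (Finset.univ.filter (fun x => qB x = 0)).image (· + s)
        = Finset.univ.filter (fun t => qB (t + s) = 0) := by
      ext t
      simp only [Finset.mem_image, Finset.mem_filter, Finset.mem_univ, true_and]
      constructor
      · rintro ⟨u, hu, rfl⟩
        rwa [add_assoc, addself, add_zero]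
      · intro h
        exact ⟨t + s, h, by rw [add_assoc, addself, add_zero]⟩
    rw [himg, Finset.sum_filter]
    have : (M + E s) / 2 = ∑ t, (m t + m t * chi (qB (t + s))) / 2 := by
      rw [← Finset.sum_div, ← Finset.sum_add_distrib]
    rw [this]
    refine Finset.sum_congr rfl fun t _ => ?_
    by_cases h : qB (t + s) = 0 <;> simp [h, chi] <;> ring
  -- Step B : second moment
  have hB : ∑ s, (E s) ^ 2 ≤ 2 * M := by
    have inner : ∀ t t' : I → ZMod 2,
        ∑ s, chi (qB (t + s)) * chi (qB (t' + s))
          = chi (qB (t + t')) * ∑ v, chi (bet v (t + t')) := by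
      intro t t'
      have h1 : ∀ s, chi (qB (t + s)) * chi (qB (t' + s))
          = chi (qB (t + t')) * chi (bet (t + s) (t + t')) := by
        intro s
        have ht' : t' + s = (t + s) + (t + t') := by
          rw [add_add_add_comm, addself, zero_add, add_comm]
        have e1 : qB (t' + s) = qB (t + s) + (qB (t + t') + bet (t + s) (t + t')) := by
          rw [ht', qB_add]; ring
        rw [e1, chi_add, chi_add, ← mul_assoc, chi_mul_self, one_mul]
      simp only [h1]
      rw [← Finset.mul_sum]
      congr 1
      exact Equiv.sum_comp (Equiv.addLeft t) (fun v => chi (bet v (t + t')))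
    have key : ∑ s, (E s) ^ 2
        = ∑ t, ∑ t', (m t * m t') * (chi (qB (t + t')) * ∑ v, chi (bet v (t + t'))) := by
      have e1 : ∀ s, (E s) ^ 2
          = ∑ t, ∑ t', (m t * m t') * (chi (qB (t + s)) * chi (qB (t' + s))) := by
        intro s
        rw [sq, hEdef]
        rw [Finset.sum_mul_sum]
        refine Finset.sum_congr rfl fun t _ => Finset.sum_congr rfl fun t' _ => by ring
      simp only [e1]
      rw [Finset.sum_comm]
      refine Finset.sum_congr rfl fun t _ => ?_
      rw [Finset.sum_comm]
      refine Finset.sum_congr rfl fun t' _ => ?_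
      rw [← Finset.mul_sum, inner]
    rw [key]
    have hKabs : ∀ d : I → ZMod 2, |∑ v, chi (bet v d)| ≤ 2 ^ N := by
      intro d
      calc |∑ v, chi (bet v d)| ≤ ∑ v, |chi (bet v d)| := Finset.abs_sum_le_sum_abs _ _
        _ = ∑ _v : I → ZMod 2, (1:ℝ) := by simp only [abs_chi]
        _ = 2 ^ N := by
            rw [Finset.sum_const, Finset.card_univ, nsmul_eq_mul, mul_one, card_fun2]
    set c1 : I → ZMod 2 := fun _ => 1 with hc1
    have vanish : ∀ t t' : I → ZMod 2, t' ∉ ({t, t + c1} : Finset (I → ZMod 2)) →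
        (m t * m t') * (chi (qB (t + t')) * ∑ v, chi (bet v (t + t'))) = 0 := by
      intro t t' hmem
      have : ∑ v, chi (bet v (t + t')) = 0 := by
        apply K_eq_zero
        intro hall
        rcases bet_all_zero _ hall with h | h
        · apply hmem
          have : t' = t := by
            have := congrArg (fun z => t + z) h
            simpa [← add_assoc, addself, add_comm] using this
          simp [this]
        · apply hmem
          have : t' = t + c1 := by
            have := congrArg (fun z => t + z) h
            rw [← add_assoc, addself, zero_add] at this
            rw [this, hc1]
          simp [this]
      rw [this, mul_zero, mul_zero]
    have bound_t : ∀ t : I → ZMod 2,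
        ∑ t', (m t * m t') * (chi (qB (t + t')) * ∑ v, chi (bet v (t + t'))) ≤ 2 * m t := by
      intro t
      have hsub : ∑ t', (m t * m t') * (chi (qB (t + t')) * ∑ v, chi (bet v (t + t')))
          = ∑ t' ∈ ({t, t + c1} : Finset (I → ZMod 2)),
              (m t * m t') * (chi (qB (t + t')) * ∑ v, chi (bet v (t + t'))) := by
        symm
        apply Finset.sum_subset (Finset.subset_univ _)
        intro x _ hx
        exact vanish t x hx
      rw [hsub]
      have habs : ∀ t' : I → ZMod 2,
          (m t * m t') * (chi (qB (t + t')) * ∑ v, chi (bet v (t + t'))) ≤ m t := by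
        intro t'
        have h1 : |(m t * m t') * (chi (qB (t + t')) * ∑ v, chi (bet v (t + t')))| ≤ m t := by
          rw [abs_mul, abs_of_nonneg (mul_nonneg (hm0 t) (hm0 t')), abs_mul, abs_chi, one_mul]
          calc m t * m t' * |∑ v, chi (bet v (t + t'))|
              ≤ m t * (1 / 2 ^ N) * (2 ^ N) := by
                apply mul_le_mul
                · exact mul_le_mul_of_nonneg_left (hm1 t') (hm0 t)
                · exact hKabs _
                · exact abs_nonneg _
                · exact mul_nonneg (hm0 t) (by positivity)
            _ = m t := by field_simp
        calc (m t * m t') * (chi (qB (t + t')) * ∑ v, chi (bet v (t + t')))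
            ≤ |(m t * m t') * (chi (qB (t + t')) * ∑ v, chi (bet v (t + t')))| := le_abs_self _
          _ ≤ m t := h1
      calc ∑ t' ∈ ({t, t + c1} : Finset (I → ZMod 2)),
              (m t * m t') * (chi (qB (t + t')) * ∑ v, chi (bet v (t + t')))
          ≤ ∑ _t' ∈ ({t, t + c1} : Finset (I → ZMod 2)), m t :=
            Finset.sum_le_sum fun x _ => habs x
        _ = ({t, t + c1} : Finset (I → ZMod 2)).card * m t := by
            rw [Finset.sum_const, nsmul_eq_mul]
        _ ≤ 2 * m t := by
            apply mul_le_mul_of_nonneg_right _ (hm0 t)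
            have : ({t, t + c1} : Finset (I → ZMod 2)).card ≤ 2 := by
              refine le_trans (Finset.card_insert_le _ _) ?_
              simp
            exact_mod_cast this
    calc ∑ t, ∑ t', (m t * m t') * (chi (qB (t + t')) * ∑ v, chi (bet v (t + t')))
        ≤ ∑ t, 2 * m t := Finset.sum_le_sum fun t _ => bound_t t
      _ = 2 * M := by rw [← Finset.mul_sum]
  -- Step C : Chebyshev
  set T : Finset (I → ZMod 2) := Finset.univ.filter
    (fun s => |(∑ t ∈ (Finset.univ.filter (fun x => qB x = 0)).image (· + s), m t) - M / 2| < δ)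
    with hTdef
  refine ⟨T, ?_, fun s hs => (Finset.mem_filter.mp hs).2⟩
  set Tc : Finset (I → ZMod 2) := Finset.univ.filter
    (fun s => ¬ |(∑ t ∈ (Finset.univ.filter (fun x => qB x = 0)).image (· + s), m t) - M / 2| < δ)
    with hTcdef
  have hcards : (T.card : ℝ) + Tc.card = 2 ^ N := by
    have h0 : T.card + Tc.card = Fintype.card (I → ZMod 2) := by
      have h := Finset.card_filter_add_card_filter_not
        (s := (Finset.univ : Finset (I → ZMod 2)))
        (p := fun s => |(∑ t ∈ (Finset.univ.filter (fun x => qB x = 0)).image (· + s), m t) - M / 2| < δ)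
      rw [Finset.card_univ] at h
      exact h
    have h1 : ((T.card : ℝ) + Tc.card) = ((T.card + Tc.card : ℕ) : ℝ) := by push_cast; ring
    rw [h1, h0, card_fun2]
  have hTcb : (Tc.card : ℝ) * (4 * δ ^ 2) ≤ 2 := by
    have hlower : ∀ s ∈ Tc, 4 * δ ^ 2 ≤ (E s) ^ 2 := by
      intro s hs
      have hs' : δ ≤ |(∑ t ∈ (Finset.univ.filter (fun x => qB x = 0)).image (· + s), m t) - M / 2| := by
        have := (Finset.mem_filter.mp hs).2
        linarith [not_lt.mp this]
      rw [hS s] at hs'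
      have : (M + E s) / 2 - M / 2 = E s / 2 := by ring
      rw [this] at hs'
      have h2 : 2 * δ ≤ |E s| := by
        rw [abs_div] at hs'
        rw [abs_of_pos (by norm_num : (0:ℝ) < 2)] at hs'
        linarith
      nlinarith [sq_abs (E s), abs_nonneg (E s)]
    calc (Tc.card : ℝ) * (4 * δ ^ 2) = ∑ _s ∈ Tc, 4 * δ ^ 2 := by
          rw [Finset.sum_const, nsmul_eq_mul]
      _ ≤ ∑ s ∈ Tc, (E s) ^ 2 := Finset.sum_le_sum hlower
      _ ≤ ∑ s, (E s) ^ 2 := by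
          apply Finset.sum_le_sum_of_subset_of_nonneg (Finset.subset_univ _)
          intro x _ _; positivity
      _ ≤ 2 * M := hB
      _ ≤ 2 := by linarith
  rw [gt_iff_lt, lt_div_iff₀ h2N]
  have hN' : 1 < 2 * δ ^ 3 * 2 ^ N := by
    rw [div_lt_iff₀ (by positivity)] at hN
    linarith
  have hTclt : (Tc.card : ℝ) < δ * 2 ^ N := by
    have h1 : (Tc.card : ℝ) * (4 * δ ^ 2) < (δ * 2 ^ N) * (4 * δ ^ 2) := by nlinarith
    exact lt_of_mul_lt_mul_right h1 (by positivity)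
  linarith

/-- Theorem 2.4 of the paper (distributions): for every `k` and `ε, δ > 0` there is `n`
such that for every finite `I` with `|I| > n` there is a partition `2^I = a⁰ ∪ a¹`
such that for every distribution `m` on `2^I` with total mass `≥ ε` there is a large
set `T` of shifts `s` for which `∑ {m(t) : t ∈ a⁰ + s}` is within `δ` of `m̄/2`. -/
theorem stmt5 (k : ℕ) (ε δ : ℝ) (hε : 0 < ε) (hδ : 0 < δ) :
    ∃ n : ℕ, ∀ (I : Type) [Fintype I] [DecidableEq I], n < Fintype.card I →
      ∃ a0 a1 : Finset (I → ZMod 2),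
        a0 ∪ a1 = Finset.univ ∧ Disjoint a0 a1 ∧
        ∀ m : (I → ZMod 2) → ℝ,
          (∀ x, 0 ≤ m x) → (∀ x, m x ≤ 1 / 2 ^ Fintype.card I) →
          ε ≤ ∑ x, m x →
          ∃ T : Finset (I → ZMod 2), (T.card : ℝ) / 2 ^ Fintype.card I > 1 - δ ∧
            ∀ s ∈ T,
              |(∑ t ∈ a0.image (· + s), m t) - (∑ x, m x) / 2| < δ := by
  obtain ⟨n, hn⟩ : ∃ n : ℕ, 1 / (2 * δ ^ 3) < (2:ℝ) ^ n :=
    pow_unbounded_of_one_lt _ one_lt_two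
  refine ⟨n, ?_⟩
  intro I _ _ hcard
  letI : LinearOrder I := LinearOrder.lift' (Fintype.equivFin I) (Equiv.injective _)
  have h2 : 1 / (2 * δ ^ 3) < (2:ℝ) ^ Fintype.card I :=
    lt_trans hn (pow_lt_pow_right₀ one_lt_two hcard)
  obtain ⟨a0, a1, hu, hd, h3⟩ := core δ hδ h2
  exact ⟨a0, a1, hu, hd, fun m hm0 hm1 _ => h3 m hm0 hm1⟩
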